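/- arXiv:1205.1928 — 5 statements merged into one kernel-verified Lean document; each statement's English description precedes it below -/
import Mathlib

section
/- Let H be a real Hilbert space with dim H ≥ 2, and Ω: H → ℝ ∪ {+∞} satisfy Ω(x+y) ≥ max(Ω(x), Ω(y)) for all orthogonal x, y ∈ H. Then Ω(x) ≥ Ω(λx) for all x ∈ H and all λ ∈ [0,1]. -/
open RealInnerProductSpace

theorem stmt1 {H : Type*} [NormedAddCommGroup H] [InnerProductSpace ℝ H] [CompleteSpace H]
    (hdim : 2 ≤ Module.rank ℝ H)
    (Ω : H → EReal)
    (hΩ : ∀ x y : H, ⟪x, y⟫ = 0 → Ω (x + y) ≥ max (Ω x) (Ω y)) :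
    ∀ x : H, ∀ lam ∈ Set.Icc (0 : ℝ) 1, Ω x ≥ Ω (lam • x) := by
  intro x lam hlam
  obtain ⟨hl0, hl1⟩ := hlam
  by_cases hx : x = 0
  · simp [hx]
  -- obtain a nonzero vector orthogonal to x
  have hv : ∃ v : H, v ≠ 0 ∧ ⟪x, v⟫ = 0 := by
    by_contra hcon
    push_neg at hcon
    have hinj : Function.Injective ((innerSL ℝ x).toLinearMap : H →ₗ[ℝ] ℝ) := by
      rw [injective_iff_map_eq_zero]
      intro v hv0
      by_contra hne
      exact (hcon v hne hv0).elim
    have hle := LinearMap.lift_rank_le_of_injective ((innerSL ℝ x).toLinearMap : H →ₗ[ℝ] ℝ) hinj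
    rw [Module.rank_self] at hle
    have hle2 : Module.rank ℝ H ≤ 1 := by simpa using hle
    have : (2 : Cardinal) ≤ 1 := hdim.trans hle2
    norm_num at this
  obtain ⟨v, hv0, hxv⟩ := hv
  have hvn : ‖v‖ ≠ 0 := norm_ne_zero_iff.mpr hv0
  set c : ℝ := Real.sqrt (lam * (1 - lam)) * ‖x‖ / ‖v‖ with hc
  set u : H := c • v with hu
  have hxu : ⟪x, u⟫ = 0 := by
    rw [hu, real_inner_smul_right, hxv, mul_zero]
  have hux : ⟪u, x⟫ = 0 := by rw [real_inner_comm]; exact hxu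
  have hll : 0 ≤ lam * (1 - lam) := mul_nonneg hl0 (by linarith)
  have huu : ⟪u, u⟫ = lam * (1 - lam) * ⟪x, x⟫ := by
    have hc2 : c ^ 2 = lam * (1 - lam) * ‖x‖ ^ 2 / ‖v‖ ^ 2 := by
      rw [hc, div_pow, mul_pow, Real.sq_sqrt hll]
    rw [hu, real_inner_smul_right, real_inner_smul_left, real_inner_self_eq_norm_sq,
      real_inner_self_eq_norm_sq, show c * (c * ‖v‖ ^ 2) = c ^ 2 * ‖v‖ ^ 2 by ring, hc2,
      div_mul_cancel₀ _ (pow_ne_zero 2 hvn)]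
  set w : H := lam • x + u with hw
  have h2 : Ω w ≥ Ω (lam • x) := by
    have := hΩ (lam • x) u (by rw [real_inner_smul_left, hxu, mul_zero])
    exact le_trans (le_max_left _ _) this
  have h1 : Ω x ≥ Ω w := by
    have horth : ⟪w, x - w⟫ = 0 := by
      rw [hw]
      simp only [inner_sub_right, inner_add_left, inner_add_right, real_inner_smul_left,
        real_inner_smul_right, hxu, hux, huu]
      ring
    have := hΩ w (x - w) horth
    rw [add_sub_cancel] at this
    exact le_trans (le_max_left _ _) this
  exact le_trans h2 h1
end

section
/- Let H be a real Hilbert space with dim H ≥ 2, and let Ω: H → ℝ ∪ {+∞} be lower semicontinuous. Then Ω(w) = h(‖w‖) for some nondecreasing h: ℝ → ℝ ∪ {+∞} if and only if Ω(x+y) ≥ max(Ω(x), Ω(y)) for all x, y ∈ H with ⟨x,y⟩ = 0. -/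
open RealInnerProductSpace

section Aux

variable {H : Type*} [NormedAddCommGroup H] [InnerProductSpace ℝ H]

lemma aux_unit_orth [CompleteSpace H] (hdim : 2 ≤ Module.rank ℝ H) (x : H) :
    ∃ u : H, ‖u‖ = 1 ∧ ⟪x, u⟫ = 0 := by
  have hK : (ℝ ∙ x)ᗮ ≠ ⊥ := by
    intro hbot
    have htop : (ℝ ∙ x) = ⊤ := (Submodule.orthogonal_eq_bot_iff).mp hbot
    have h1 : Module.rank ℝ (ℝ ∙ x) ≤ 1 := by
      simpa using rank_span_le (R := ℝ) ({x} : Set H)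
    rw [htop] at h1
    have := (rank_top ℝ H) ▸ h1
    exact absurd (hdim.trans this) (by norm_num)
  obtain ⟨v, hv, hv0⟩ := Submodule.exists_mem_ne_zero_of_ne_bot hK
  refine ⟨‖v‖⁻¹ • v, ?_, ?_⟩
  · simp [norm_smul, norm_ne_zero_iff.mpr hv0, inv_mul_cancel₀]
  · have := (Submodule.mem_orthogonal _ v).mp hv x (Submodule.mem_span_singleton_self x)
    rw [real_inner_smul_right, real_inner_comm] at *
    simp [this]

lemma aux_cos_pow_tendsto (θ : ℝ) :
    Filter.Tendsto (fun n : ℕ => (Real.cos (θ / n)) ^ n) Filter.atTop (nhds 1) := by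
  have hlow : Filter.Tendsto (fun n : ℕ => 1 - θ ^ 2 / (2 * n)) Filter.atTop (nhds 1) := by
    have : Filter.Tendsto (fun n : ℕ => θ ^ 2 / (2 * n)) Filter.atTop (nhds 0) := by
      apply Filter.Tendsto.div_atTop (tendsto_const_nhds)
      exact Filter.Tendsto.const_mul_atTop (by norm_num) tendsto_natCast_atTop_atTop
    simpa using (tendsto_const_nhds (x := (1:ℝ))).sub this
  apply tendsto_of_tendsto_of_tendsto_of_le_of_le' hlow tendsto_const_nhds
  · have hev : ∀ᶠ n : ℕ in Filter.atTop, (θ / n) ^ 2 ≤ 2 := by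
      have : Filter.Tendsto (fun n : ℕ => (θ / n) ^ 2) Filter.atTop (nhds 0) := by
        have h1 : Filter.Tendsto (fun n : ℕ => θ / n) Filter.atTop (nhds 0) :=
          Filter.Tendsto.div_atTop tendsto_const_nhds tendsto_natCast_atTop_atTop
        simpa using h1.pow 2
      exact this.eventually_le_const (by norm_num)
    filter_upwards [hev, Filter.eventually_ge_atTop 1] with n hn hn1
    have hn0 : (0:ℝ) < n := by exact_mod_cast hn1
    have hb : 1 - (θ / n) ^ 2 / 2 ≤ Real.cos (θ / n) := Real.one_sub_sq_div_two_le_cos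
    have hbnn : 0 ≤ 1 - (θ / n) ^ 2 / 2 := by nlinarith
    have hber : 1 + (n : ℝ) * (-((θ / n) ^ 2 / 2)) ≤ (1 + -((θ / n) ^ 2 / 2)) ^ n := by
      apply one_add_mul_le_pow; nlinarith
    have heq : 1 + (n : ℝ) * (-((θ / n) ^ 2 / 2)) = 1 - θ ^ 2 / (2 * n) := by
      field_simp; ring
    calc 1 - θ ^ 2 / (2 * n) = 1 + (n : ℝ) * (-((θ / n) ^ 2 / 2)) := heq.symm
      _ ≤ (1 + -((θ / n) ^ 2 / 2)) ^ n := hber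
      _ ≤ (Real.cos (θ / n)) ^ n := by
          apply pow_le_pow_left₀ (by linarith) (by linarith)
  · filter_upwards with n
    calc (Real.cos (θ / n)) ^ n ≤ |(Real.cos (θ / n)) ^ n| := le_abs_self _
      _ = |Real.cos (θ / n)| ^ n := abs_pow _ _
      _ ≤ 1 := pow_le_one₀ (abs_nonneg _) (Real.abs_cos_le_one _)

lemma aux_key (Ω : H → EReal) (hyp : ∀ x y : H, ⟪x, y⟫ = 0 → Ω (x + y) ≥ max (Ω x) (Ω y))
    {p w : H} (h : ⟪p, w - p⟫ = 0) : Ω p ≤ Ω w := by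
  have h2 := hyp p (w - p) h
  rw [add_sub_cancel] at h2
  exact le_trans (le_max_left _ _) h2

lemma aux_inner {e u : H} (he : ‖e‖ = 1) (hu : ‖u‖ = 1) (heu : ⟪e, u⟫ = 0)
    (a b a' b' : ℝ) : ⟪a • e + b • u, a' • e + b' • u⟫ = a * a' + b * b' := by
  have hue : ⟪u, e⟫ = 0 := by rw [real_inner_comm]; exact heu
  simp [inner_add_left, inner_add_right, real_inner_smul_left, real_inner_smul_right,
    real_inner_self_eq_norm_sq, he, hu, heu, hue]
  ring

lemma aux_chain (Ω : H → EReal) (hyp : ∀ x y : H, ⟪x, y⟫ = 0 → Ω (x + y) ≥ max (Ω x) (Ω y))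
    {e u : H} (he : ‖e‖ = 1) (hu : ‖u‖ = 1) (heu : ⟪e, u⟫ = 0)
    (r θ : ℝ) (n : ℕ) (hn : 1 ≤ n) :
    Ω ((r * (Real.cos (θ / n)) ^ n) • e) ≤
      Ω ((r * Real.cos θ) • e + (r * Real.sin θ) • u) := by
  set α := θ / n with hα
  set c := Real.cos α with hc
  set p : ℕ → H := fun k =>
    (r * c ^ (n - k) * Real.cos (k * α)) • e + (r * c ^ (n - k) * Real.sin (k * α)) • u with hp
  have hstep : ∀ k, k < n → Ω (p k) ≤ Ω (p (k + 1)) := by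
    intro k hk
    apply aux_key Ω hyp
    have h1 : ⟪p k, p (k + 1)⟫ = ⟪p k, p k⟫ := by
      rw [hp]
      rw [aux_inner he hu heu, aux_inner he hu heu]
      have hnk : n - k = (n - (k + 1)) + 1 := by omega
      set m := n - (k + 1) with hm
      rw [hnk]
      have key : Real.cos ((k + 1 : ℝ) * α) * Real.cos (k * α)
          + Real.sin ((k + 1 : ℝ) * α) * Real.sin (k * α) = c := by
        rw [hc, ← Real.cos_sub]; ring_nf
      have pyth := Real.sin_sq_add_cos_sq ((k : ℝ) * α)
      push_cast
      linear_combination (r ^ 2 * c ^ (2 * m + 1)) * key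
        - (r ^ 2 * (c ^ (m + 1)) ^ 2) * pyth
    rw [inner_sub_right, h1, sub_self]
  have hmain : ∀ k, k ≤ n → Ω (p 0) ≤ Ω (p k) := by
    intro k
    induction k with
    | zero => intro _; exact le_refl _
    | succ k ih => intro hk; exact (ih (by omega)).trans (hstep k (by omega))
  have h0 : p 0 = (r * c ^ n) • e := by
    simp [hp]
  have hnn : p n = (r * Real.cos θ) • e + (r * Real.sin θ) • u := by
    have hne : (n : ℝ) ≠ 0 := by positivity
    have : (n : ℝ) * α = θ := by rw [hα]; field_simp
    simp [hp, this]
  have := hmain n le_rfl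
  rwa [h0, hnn] at this

lemma aux_eq_norm [CompleteSpace H] (hdim : 2 ≤ Module.rank ℝ H) (Ω : H → EReal)
    (hlsc : LowerSemicontinuous Ω)
    (hyp : ∀ x y : H, ⟪x, y⟫ = 0 → Ω (x + y) ≥ max (Ω x) (Ω y))
    {x y : H} (hxy : ‖x‖ = ‖y‖) : Ω x ≤ Ω y := by
  rcases eq_or_ne x 0 with hx0 | hx0
  · have hy0 : y = 0 := by
      rw [hx0] at hxy; simpa using hxy.symm
    rw [hx0, hy0]
  have hr : 0 < ‖x‖ := norm_pos_iff.mpr hx0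
  set r := ‖x‖ with hrdef
  set e : H := r⁻¹ • x with hedef
  have he : ‖e‖ = 1 := by
    rw [hedef, norm_smul, norm_inv, Real.norm_eq_abs, abs_of_nonneg hr.le, ← hrdef]
    exact inv_mul_cancel₀ hr.ne'
  have hre : r • e = x := by
    rw [hedef, smul_smul, mul_inv_cancel₀ hr.ne', one_smul]
  set a := ⟪e, y⟫ with hadef
  set v := y - a • e with hvdef
  have hev : ⟪e, v⟫ = 0 := by
    rw [hvdef, inner_sub_right, real_inner_smul_right, real_inner_self_eq_norm_sq, he]
    ring
  set b := ‖v‖ with hbdef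
  have hb0 : 0 ≤ b := norm_nonneg _
  have hyv : y = a • e + v := by rw [hvdef]; abel
  have hab : a ^ 2 + b ^ 2 = r ^ 2 := by
    have h2 := norm_add_sq_real (a • e) v
    rw [real_inner_smul_left, hev, norm_smul, he, mul_one, Real.norm_eq_abs, sq_abs,
      mul_zero, mul_zero] at h2
    have h1 : ‖y‖ ^ 2 = a ^ 2 + b ^ 2 := by
      rw [hyv, h2, hbdef]; ring
    rw [hxy]
    linarith [h1]
  have ha2 : a ^ 2 ≤ r ^ 2 := by nlinarith
  have har : -1 ≤ a / r ∧ a / r ≤ 1 := by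
    constructor
    · rw [le_div_iff₀ hr]; nlinarith
    · rw [div_le_iff₀ hr]; nlinarith
  obtain ⟨u, hu, heu, hbu⟩ : ∃ u : H, ‖u‖ = 1 ∧ ⟪e, u⟫ = 0 ∧ b • u = v := by
    by_cases hv : v = 0
    · obtain ⟨u, hu1, hu2⟩ := aux_unit_orth hdim x
      refine ⟨u, hu1, ?_, ?_⟩
      · rw [hedef, real_inner_smul_left, hu2, mul_zero]
      · rw [hv, hbdef, hv, norm_zero, zero_smul]
    · have hbne : b ≠ 0 := by rwa [hbdef, norm_ne_zero_iff]
      refine ⟨b⁻¹ • v, ?_, ?_, ?_⟩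
      · rw [norm_smul, norm_inv, Real.norm_eq_abs, abs_of_nonneg hb0, ← hbdef]
        exact inv_mul_cancel₀ hbne
      · rw [real_inner_smul_right, hev, mul_zero]
      · rw [smul_smul, mul_inv_cancel₀ hbne, one_smul]
  set θ := Real.arccos (a / r) with hθdef
  have hcos : Real.cos θ = a / r := Real.cos_arccos har.1 har.2
  have hrcos : r * Real.cos θ = a := by rw [hcos]; field_simp
  have hrsin : r * Real.sin θ = b := by
    have hsin : Real.sin θ = Real.sqrt (1 - (a / r) ^ 2) := by
      rw [hθdef, Real.sin_arccos]
    have hnn : 0 ≤ 1 - (a / r) ^ 2 := by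
      rw [div_pow]
      rw [sub_nonneg, div_le_one (by positivity)]
      exact ha2
    have hsq : (r * Real.sin θ) ^ 2 = b ^ 2 := by
      rw [hsin, mul_pow, Real.sq_sqrt hnn]
      field_simp
      nlinarith
    have hpn : 0 ≤ r * Real.sin θ := by
      rw [hsin]; positivity
    rw [← Real.sqrt_sq hpn, hsq, Real.sqrt_sq hb0]
  have hy2 : y = (r * Real.cos θ) • e + (r * Real.sin θ) • u := by
    rw [hrcos, hrsin, hbu, hyv]
  by_contra hlt
  push_neg at hlt
  have hev2 : ∀ᶠ z in nhds x, Ω y < Ω z := hlsc x (Ω y) hlt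
  have htend : Filter.Tendsto (fun n : ℕ => (r * (Real.cos (θ / n)) ^ n) • e)
      Filter.atTop (nhds x) := by
    have h1 : Filter.Tendsto (fun n : ℕ => r * (Real.cos (θ / n)) ^ n)
        Filter.atTop (nhds r) := by
      simpa using (aux_cos_pow_tendsto θ).const_mul r
    have := h1.smul_const e
    rwa [hre] at this
  have hev3 := (htend.eventually hev2).and (Filter.eventually_ge_atTop 1)
  obtain ⟨n, hn1, hn2⟩ := hev3.exists
  have hchain := aux_chain Ω hyp he hu heu r θ n hn2
  rw [← hy2] at hchain
  exact absurd (hn1.trans_le hchain) (lt_irrefl _)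

lemma aux_mono [CompleteSpace H] (hdim : 2 ≤ Module.rank ℝ H) (Ω : H → EReal)
    (hlsc : LowerSemicontinuous Ω)
    (hyp : ∀ x y : H, ⟪x, y⟫ = 0 → Ω (x + y) ≥ max (Ω x) (Ω y))
    {x y : H} (hxy : ‖x‖ ≤ ‖y‖) : Ω x ≤ Ω y := by
  obtain ⟨u, hu, hxu⟩ := aux_unit_orth hdim x
  set s := Real.sqrt (‖y‖ ^ 2 - ‖x‖ ^ 2) with hsdef
  have hs2 : s ^ 2 = ‖y‖ ^ 2 - ‖x‖ ^ 2 := by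
    rw [hsdef, Real.sq_sqrt]
    nlinarith [norm_nonneg x, norm_nonneg y]
  set w := x + s • u with hwdef
  have h1 : Ω x ≤ Ω w := by
    apply aux_key Ω hyp
    rw [hwdef, add_sub_cancel_left, real_inner_smul_right, hxu, mul_zero]
  have h2 : ‖w‖ = ‖y‖ := by
    have h3 := norm_add_sq_real x (s • u)
    rw [real_inner_smul_right, hxu, mul_zero, norm_smul, hu, mul_one, Real.norm_eq_abs,
      sq_abs] at h3
    rw [← hwdef] at h3
    have h4 : ‖w‖ ^ 2 = ‖y‖ ^ 2 := by rw [h3, hs2]; ring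
    rw [← Real.sqrt_sq (norm_nonneg w), h4, Real.sqrt_sq (norm_nonneg y)]
  exact h1.trans (aux_eq_norm hdim Ω hlsc hyp h2)

end Aux

theorem stmt5 {H : Type*} [NormedAddCommGroup H] [InnerProductSpace ℝ H] [CompleteSpace H]
    (hdim : 2 ≤ Module.rank ℝ H)
    (Ω : H → EReal) (hlsc : LowerSemicontinuous Ω) :
    (∃ h : ℝ → EReal, Monotone h ∧ ∀ w, Ω w = h ‖w‖) ↔
      (∀ x y : H, ⟪x, y⟫ = 0 → Ω (x + y) ≥ max (Ω x) (Ω y)) := by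
  constructor
  · rintro ⟨h, hm, hw⟩ x y hxy
    have hsq := norm_add_sq_real x y
    rw [hxy] at hsq
    have hx : ‖x‖ ≤ ‖x + y‖ := by nlinarith [norm_nonneg x, norm_nonneg y, norm_nonneg (x + y)]
    have hy : ‖y‖ ≤ ‖x + y‖ := by nlinarith [norm_nonneg x, norm_nonneg y, norm_nonneg (x + y)]
    rw [hw, hw, hw]
    exact max_le (hm hx) (hm hy)
  · intro hyp
    obtain ⟨e, he, -⟩ := aux_unit_orth hdim (0 : H)
    refine ⟨fun t => Ω ((max t 0) • e), ?_, ?_⟩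
    · intro s t hst
      apply aux_mono hdim Ω hlsc hyp
      rw [norm_smul, norm_smul, he, mul_one, mul_one, Real.norm_eq_abs, Real.norm_eq_abs,
        abs_of_nonneg (le_max_right s 0), abs_of_nonneg (le_max_right t 0)]
      exact max_le_max hst le_rfl
    · intro w
      have hmax : max ‖w‖ 0 = ‖w‖ := max_eq_left (norm_nonneg w)
      have hnorm : ‖(max ‖w‖ 0) • e‖ = ‖w‖ := by
        rw [hmax, norm_smul, he, mul_one, Real.norm_eq_abs, abs_of_nonneg (norm_nonneg w)]
      exact le_antisymm (aux_eq_norm hdim Ω hlsc hyp hnorm.symm)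
        (aux_eq_norm hdim Ω hlsc hyp hnorm)
end

section
/- Let H be a real Hilbert space with dim H ≥ 2 and Ω: H → ℝ ∪ {+∞} lower semicontinuous with Ω(x+y) ≥ max(Ω(x), Ω(y)) for all orthogonal x, y. Then for every c ≥ Ω(0), the sublevel set S_c = {x : Ω(x) ≤ c} is either a closed ball centered at the origin or all of H. -/
open RealInnerProductSpace

lemma aux_exists_orth {H : Type*} [NormedAddCommGroup H] [InnerProductSpace ℝ H]
    (hdim : 2 ≤ Module.rank ℝ H) (x : H) :
    ∃ u : H, ‖u‖ = 1 ∧ ⟪x, u⟫ = 0 := by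
  have hsp : (Submodule.span ℝ ({x} : Set H)) ≠ ⊤ := by
    intro h
    have h1 : Module.rank ℝ (Submodule.span ℝ ({x} : Set H)) ≤ 1 := by
      simpa using rank_span_le (R := ℝ) ({x} : Set H)
    rw [h, rank_top] at h1
    exact absurd (hdim.trans h1) (by norm_num)
  obtain ⟨v, hv⟩ : ∃ v : H, v ∉ Submodule.span ℝ ({x} : Set H) := by
    by_contra hcon; push_neg at hcon
    exact hsp (Submodule.eq_top_iff'.2 hcon)
  set w := v - (⟪x, v⟫ / ⟪x, x⟫) • x with hw
  have hwne : w ≠ 0 := by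
    intro h0
    apply hv
    have hveq : v = (⟪x, v⟫ / ⟪x, x⟫) • x := by
      have := sub_eq_zero.1 h0
      rwa [sub_eq_zero] at h0
    rw [hveq]
    exact Submodule.smul_mem _ _ (Submodule.mem_span_singleton_self x)
  have hxw : ⟪x, w⟫ = 0 := by
    rcases eq_or_ne x 0 with rfl | hx
    · simp [hw]
    · have hxx : ⟪x, x⟫ ≠ 0 := inner_self_ne_zero.2 hx
      rw [hw, inner_sub_right, real_inner_smul_right]
      field_simp
      simp
  refine ⟨‖w‖⁻¹ • w, ?_, ?_⟩
  · rw [norm_smul, norm_inv, norm_norm]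
    field_simp [norm_ne_zero_iff.2 hwne]
  · rw [real_inner_smul_right, hxw, mul_zero]

lemma aux_combo {H : Type*} [NormedAddCommGroup H] [InnerProductSpace ℝ H]
    {e₁ e₂ : H} (h1 : ‖e₁‖ = 1) (h2 : ‖e₂‖ = 1) (h12 : ⟪e₁, e₂⟫ = 0)
    (p q p' q' : ℝ) : ⟪p • e₁ + q • e₂, p' • e₁ + q' • e₂⟫ = p * p' + q * q' := by
  have h21 : ⟪e₂, e₁⟫ = 0 := by rw [real_inner_comm]; exact h12
  have he1 : ⟪e₁, e₁⟫ = 1 := by rw [real_inner_self_eq_norm_sq, h1]; norm_num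
  have he2 : ⟪e₂, e₂⟫ = 1 := by rw [real_inner_self_eq_norm_sq, h2]; norm_num
  simp [inner_add_left, inner_add_right, real_inner_smul_left, real_inner_smul_right,
    h12, h21, he1, he2]
  simp only [h1, h2]
  ring

set_option maxHeartbeats 1000000 in
lemma aux_mono_s6 {H : Type*} [NormedAddCommGroup H] [InnerProductSpace ℝ H]
    (hdim : 2 ≤ Module.rank ℝ H) (S : Set H)
    (hstep : ∀ p x : H, ⟪x, p - x⟫ = 0 → p ∈ S → x ∈ S)
    {y : H} (hy : y ∈ S) {z : H} (hz : ‖z‖ < ‖y‖) : z ∈ S := by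
  set R := ‖y‖ with hRdef
  have hR : 0 < R := lt_of_le_of_lt (norm_nonneg z) hz
  rcases eq_or_ne z 0 with rfl | hz0
  · exact hstep y 0 (by simp) hy
  set s := ‖z‖ with hsdef
  have hspos : 0 < s := norm_pos_iff.2 hz0
  set e₁ := R⁻¹ • y with he₁def
  have he₁ : ‖e₁‖ = 1 := by
    rw [he₁def, norm_smul, norm_inv, Real.norm_eq_abs, abs_of_pos hR]
    field_simp
    exact hRdef.symm
  have hye : y = R • e₁ := by
    rw [he₁def, smul_smul]
    field_simp
    rw [one_smul]
  set a := ⟪z, e₁⟫ with hadef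
  obtain ⟨e₂, b, he₂, h12, hb, hzd⟩ :
      ∃ (e₂ : H) (b : ℝ), ‖e₂‖ = 1 ∧ ⟪e₁, e₂⟫ = 0 ∧ 0 ≤ b ∧ z = a • e₁ + b • e₂ := by
    set w := z - a • e₁ with hwdef
    rcases eq_or_ne w 0 with hw0 | hwne
    · obtain ⟨u, hu, hu2⟩ := aux_exists_orth hdim e₁
      refine ⟨u, 0, hu, hu2, le_refl 0, ?_⟩
      rw [zero_smul, add_zero]
      have := sub_eq_zero.1 hw0
      exact this
    · have h1w : ⟪e₁, w⟫ = 0 := by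
        rw [hwdef, inner_sub_right, real_inner_smul_right, real_inner_self_eq_norm_sq, he₁,
          real_inner_comm]
        simp [hadef]
      refine ⟨‖w‖⁻¹ • w, ‖w‖, ?_, ?_, norm_nonneg w, ?_⟩
      · rw [norm_smul, norm_inv, norm_norm]
        field_simp [norm_ne_zero_iff.2 hwne]
      · rw [real_inner_smul_right, h1w, mul_zero]
      · rw [smul_inv_smul₀ (norm_ne_zero_iff.2 hwne), hwdef]
        abel
  have hab : a ^ 2 + b ^ 2 = s ^ 2 := by
    have h := aux_combo he₁ he₂ h12 a b a b
    rw [← hzd, real_inner_self_eq_norm_sq, ← hsdef] at h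
    nlinarith [h]
  have has : -1 ≤ a / s ∧ a / s ≤ 1 := by
    constructor
    · rw [le_div_iff₀ hspos]
      nlinarith [sq_nonneg b, sq_nonneg (a + s)]
    · rw [div_le_one hspos]
      nlinarith [sq_nonneg b, sq_nonneg (a - s)]
  set φ := Real.arccos (a / s) with hφdef
  have hcosφ : Real.cos φ = a / s := Real.cos_arccos has.1 has.2
  have hφ0 : 0 ≤ φ := Real.arccos_nonneg _
  have hφπ : φ ≤ Real.pi := Real.arccos_le_pi _
  have hsinφ : Real.sin φ = b / s := by
    rw [hφdef, Real.sin_arccos]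
    rw [show 1 - (a / s) ^ 2 = (b / s) ^ 2 by field_simp; nlinarith [hab]]
    exact Real.sqrt_sq (div_nonneg hb hspos.le)
  -- choose number of steps
  obtain ⟨n₀, hn₀⟩ := exists_nat_ge (Real.pi ^ 2 * R / (2 * (R - s)))
  set n : ℕ := n₀ + 3 with hndef
  have hn3 : (3 : ℝ) ≤ (n : ℝ) := by
    rw [hndef]; push_cast; linarith [Nat.cast_nonneg (α := ℝ) n₀]
  have hnpos : (0 : ℝ) < (n : ℝ) := by linarith
  set α := φ / n with hαdef
  set c := Real.cos α with hcdef
  have hα0 : 0 ≤ α := div_nonneg hφ0 hnpos.le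
  have hαle : α ≤ Real.pi / 2 := by
    rw [hαdef]
    calc φ / (n : ℝ) ≤ Real.pi / (n : ℝ) := by gcongr
      _ ≤ Real.pi / 2 :=
        div_le_div_of_nonneg_left Real.pi_nonneg (by norm_num) (by linarith)
  have hc0 : 0 ≤ c := Real.cos_nonneg_of_mem_Icc ⟨by linarith, hαle⟩
  have hclow : 1 - φ ^ 2 / (2 * (n : ℝ) ^ 2) ≤ c := by
    have h := Real.one_sub_sq_div_two_le_cos (x := α)
    have heq : α ^ 2 / 2 = φ ^ 2 / (2 * (n : ℝ) ^ 2) := by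
      rw [hαdef, div_pow]; ring
    rw [hcdef, ← heq]
    linarith
  have hbase0 : 0 ≤ 1 - φ ^ 2 / (2 * (n : ℝ) ^ 2) := by
    have hπ4 : Real.pi ≤ 4 := Real.pi_le_four
    have h1 : φ ^ 2 ≤ 16 := by
      have := pow_le_pow_left₀ hφ0 (hφπ.trans hπ4) 2
      norm_num at this
      linarith
    have h2 : (18 : ℝ) ≤ 2 * (n : ℝ) ^ 2 := by
      have := pow_le_pow_left₀ (by norm_num : (0:ℝ) ≤ 3) hn3 2
      norm_num at this
      linarith
    have h3 : φ ^ 2 / (2 * (n : ℝ) ^ 2) ≤ 1 := by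
      rw [div_le_one (by linarith)]
      linarith
    linarith
  have hP : s ≤ R * c ^ n := by
    have hpow1 : (1 - φ ^ 2 / (2 * (n : ℝ) ^ 2)) ^ n ≤ c ^ n :=
      pow_le_pow_left₀ hbase0 hclow n
    have hpow2 : 1 - φ ^ 2 / (2 * (n : ℝ)) ≤ (1 - φ ^ 2 / (2 * (n : ℝ) ^ 2)) ^ n := by
      have h := one_add_mul_le_pow (a := -(φ ^ 2 / (2 * (n : ℝ) ^ 2))) (by linarith) n
      have heq : 1 + (n : ℝ) * -(φ ^ 2 / (2 * (n : ℝ) ^ 2)) = 1 - φ ^ 2 / (2 * (n : ℝ)) := by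
        field_simp; ring
      calc 1 - φ ^ 2 / (2 * (n : ℝ)) = 1 + (n : ℝ) * -(φ ^ 2 / (2 * (n : ℝ) ^ 2)) := heq.symm
        _ ≤ (1 + -(φ ^ 2 / (2 * (n : ℝ) ^ 2))) ^ n := h
        _ = (1 - φ ^ 2 / (2 * (n : ℝ) ^ 2)) ^ n := by ring_nf
    have hRs : 0 < R - s := by linarith [hz]
    have hnn : (n₀ : ℝ) ≤ (n : ℝ) := by rw [hndef]; push_cast; linarith
    have h2 : Real.pi ^ 2 * R ≤ 2 * (R - s) * (n : ℝ) := by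
      rw [div_le_iff₀ (by positivity)] at hn₀
      calc Real.pi ^ 2 * R ≤ (n₀ : ℝ) * (2 * (R - s)) := hn₀
        _ ≤ (n : ℝ) * (2 * (R - s)) := mul_le_mul_of_nonneg_right hnn (by linarith)
        _ = 2 * (R - s) * (n : ℝ) := by ring
    have h3 : s ≤ R * (1 - Real.pi ^ 2 / (2 * (n : ℝ))) := by
      have hexp : R * (1 - Real.pi ^ 2 / (2 * (n : ℝ))) = R - Real.pi ^ 2 * R / (2 * (n : ℝ)) := by
        field_simp
      rw [hexp]
      have hd : Real.pi ^ 2 * R / (2 * (n : ℝ)) ≤ R - s := by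
        rw [div_le_iff₀ (by positivity)]
        exact h2.trans_eq (by ring)
      linarith
    have h4 : 1 - Real.pi ^ 2 / (2 * (n : ℝ)) ≤ 1 - φ ^ 2 / (2 * (n : ℝ)) := by
      have : φ ^ 2 ≤ Real.pi ^ 2 := pow_le_pow_left₀ hφ0 hφπ 2
      gcongr
    calc s ≤ R * (1 - Real.pi ^ 2 / (2 * (n : ℝ))) := h3
      _ ≤ R * (1 - φ ^ 2 / (2 * (n : ℝ))) := mul_le_mul_of_nonneg_left h4 hR.le
      _ ≤ R * (1 - φ ^ 2 / (2 * (n : ℝ) ^ 2)) ^ n := mul_le_mul_of_nonneg_left hpow2 hR.le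
      _ ≤ R * c ^ n := mul_le_mul_of_nonneg_left hpow1 hR.le
  -- the step lemma in coordinates
  have hcombo := aux_combo he₁ he₂ h12
  have hstep' : ∀ p q p' q' : ℝ, p' * p + q' * q = p' ^ 2 + q' ^ 2 →
      p • e₁ + q • e₂ ∈ S → p' • e₁ + q' • e₂ ∈ S := by
    intro p q p' q' hpq hmem
    refine hstep _ _ ?_ hmem
    rw [inner_sub_right, hcombo, hcombo]
    linear_combination hpq
  -- the rotation chain
  have chain : ∀ k : ℕ,
      (R * c ^ k * Real.cos (k * α)) • e₁ + (R * c ^ k * Real.sin (k * α)) • e₂ ∈ S := by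
    intro k
    induction k with
    | zero =>
      simp only [pow_zero, Nat.cast_zero, zero_mul, Real.cos_zero, Real.sin_zero, mul_one,
        mul_zero, zero_smul, add_zero]
      rwa [← hye]
    | succ k ih =>
      apply hstep' _ _ _ _ ?_ ih
      have hcs : Real.cos (((k : ℕ) + 1 : ℕ) * α) * Real.cos (k * α)
          + Real.sin (((k : ℕ) + 1 : ℕ) * α) * Real.sin (k * α) = c := by
        rw [hcdef, ← Real.cos_sub]
        congr 1
        push_cast
        ring
      have hpyth := Real.sin_sq_add_cos_sq (((k : ℕ) + 1 : ℕ) * α)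
      linear_combination (R ^ 2 * c ^ k * c ^ k * c) * hcs
        - (R ^ 2 * (c ^ k * c) ^ 2) * hpyth
  clear_value c α φ a e₁ s R
  have hnα : (n : ℝ) * α = φ := by
    rw [hαdef, ← mul_div_assoc, mul_div_cancel_left₀ φ hnpos.ne']
  have hend := chain n
  rw [hnα, hcosφ, hsinφ] at hend
  set P := R * c ^ n with hPdef
  have hPs : s ≤ P := hP
  set t := Real.sqrt (s * (P - s)) with htdef
  have ht2 : t ^ 2 = s * (P - s) := Real.sq_sqrt (mul_nonneg hspos.le (by linarith))
  clear_value P t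
  have hmid : (a - t * b / s) • e₁ + (b + t * a / s) • e₂ ∈ S := by
    apply hstep' _ _ _ _ ?_ hend
    have hs' : s ≠ 0 := hspos.ne'
    have hinv : s * s⁻¹ = 1 := mul_inv_cancel₀ hs'
    linear_combination (P * s⁻¹ - 1 - t ^ 2 * s⁻¹ ^ 2) * hab - (s * s⁻¹) ^ 2 * ht2
      + (-(s * P - s ^ 2) * (s * s⁻¹) + s ^ 2) * hinv
  rw [hzd]
  apply hstep' _ _ _ _ ?_ hmid
  have hs' : s ≠ 0 := hspos.ne'
  field_simp
  ring

theorem stmt6 {H : Type*} [NormedAddCommGroup H] [InnerProductSpace ℝ H] [CompleteSpace H]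
    (hdim : 2 ≤ Module.rank ℝ H)
    (Ω : H → EReal) (hlsc : LowerSemicontinuous Ω)
    (hΩ : ∀ x y : H, ⟪x, y⟫ = 0 → Ω (x + y) ≥ max (Ω x) (Ω y)) :
    ∀ c : EReal, c ≥ Ω 0 →
      (∃ r : ℝ, 0 ≤ r ∧ {x : H | Ω x ≤ c} = Metric.closedBall (0 : H) r) ∨
      {x : H | Ω x ≤ c} = Set.univ := by
  intro c hc
  set S := {x : H | Ω x ≤ c} with hSdef
  have hclosed : IsClosed S := hlsc.isClosed_preimage c
  have hstep : ∀ p x : H, ⟪x, p - x⟫ = 0 → p ∈ S → x ∈ S := by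
    intro p x hpx hp
    have h := hΩ x (p - x) hpx
    have hxp : x + (p - x) = p := by abel
    rw [hxp] at h
    exact le_trans (le_trans (le_max_left _ _) h) hp
  have mem0 : (0 : H) ∈ S := hc
  have hmono : ∀ y ∈ S, ∀ z : H, ‖z‖ < ‖y‖ → z ∈ S :=
    fun y hy z hz => aux_mono_s6 hdim S hstep hy hz
  have hlim : ∀ z : H, (∀ w : H, ‖w‖ < ‖z‖ → w ∈ S) → z ∈ S := by
    intro z hall
    rcases eq_or_ne z 0 with rfl | hz0
    · exact mem0
    have hzpos : 0 < ‖z‖ := norm_pos_iff.2 hz0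
    have hmem : ∀ k : ℕ, (1 - 1 / (k + 1 : ℝ)) • z ∈ S := by
      intro k
      apply hall
      rw [norm_smul, Real.norm_eq_abs]
      have hk0 : (0 : ℝ) < (k : ℝ) + 1 := by positivity
      have h1 : 0 ≤ 1 - 1 / (k + 1 : ℝ) := by
        have : 1 / (k + 1 : ℝ) ≤ 1 := by
          rw [div_le_one hk0]
          linarith [Nat.cast_nonneg (α := ℝ) k]
        linarith
      rw [abs_of_nonneg h1]
      have h2 : 1 - 1 / (k + 1 : ℝ) < 1 := by
        have : 0 < 1 / (k + 1 : ℝ) := by positivity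
        linarith
      nlinarith [hzpos]
    have htend : Filter.Tendsto (fun k : ℕ => (1 - 1 / (k + 1 : ℝ)) • z)
        Filter.atTop (nhds z) := by
      have h0 : Filter.Tendsto (fun k : ℕ => 1 - 1 / (k + 1 : ℝ))
          Filter.atTop (nhds 1) := by
        have h1 := tendsto_one_div_add_atTop_nhds_zero_nat (𝕜 := ℝ)
        simpa using Filter.Tendsto.const_sub 1 h1
      have h2 := h0.smul_const z
      simpa using h2
    exact hclosed.mem_of_tendsto htend (Filter.Eventually.of_forall hmem)
  by_cases hbdd : ∃ M : ℝ, ∀ x ∈ S, ‖x‖ ≤ M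
  · left
    obtain ⟨M, hM⟩ := hbdd
    set T := (fun x : H => ‖x‖) '' S with hT
    have hTne : T.Nonempty := ⟨0, 0, mem0, norm_zero⟩
    have hTbdd : BddAbove T := ⟨M, by rintro _ ⟨x, hx, rfl⟩; exact hM x hx⟩
    refine ⟨sSup T, le_csSup hTbdd ⟨0, mem0, norm_zero⟩, ?_⟩
    ext x
    simp only [Metric.mem_closedBall, dist_zero_right]
    constructor
    · intro hx
      exact le_csSup hTbdd ⟨x, hx, rfl⟩
    · intro hx
      apply hlim
      intro w hw
      have hw2 : ‖w‖ < sSup T := lt_of_lt_of_le hw hx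
      obtain ⟨t, ⟨y, hyS, rfl⟩, hty⟩ := exists_lt_of_lt_csSup hTne hw2
      exact hmono y hyS w hty
  · right
    push_neg at hbdd
    ext z
    simp only [Set.mem_univ, iff_true]
    apply hlim
    intro w hw
    obtain ⟨y, hyS, hy⟩ := hbdd ‖z‖
    exact hmono y hyS w (hw.trans hy)
end

section
/- Let H be a real Hilbert space with dim H ≥ 2 and Ω: H → ℝ ∪ {+∞} lower semicontinuous such that Ω(x+y) ≥ max(Ω(x), Ω(y)) for all orthogonal x, y ∈ H. Then Ω(x) = Ω(y) whenever ‖x‖ = ‖y‖. -/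
set_option maxHeartbeats 1000000


open RealInnerProductSpace

theorem stmt7 {H : Type*} [NormedAddCommGroup H] [InnerProductSpace ℝ H] [CompleteSpace H]
    (hdim : 2 ≤ Module.rank ℝ H)
    (Ω : H → EReal) (hlsc : LowerSemicontinuous Ω)
    (hΩ : ∀ x y : H, ⟪x, y⟫ = 0 → Ω (x + y) ≥ max (Ω x) (Ω y)) :
    ∀ x y : H, ‖x‖ = ‖y‖ → Ω x = Ω y := by
  suffices key : ∀ x y : H, ‖x‖ = ‖y‖ → Ω x ≤ Ω y by
    intro x y h; exact le_antisymm (key x y h) (key y x h.symm)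
  intro x y hnorm
  classical
  rcases eq_or_ne x 0 with rfl | hx0
  · have hy0 : y = 0 := by
      have : ‖y‖ = 0 := by simpa using hnorm.symm
      simpa using this
    subst hy0; exact le_rfl
  set r : ℝ := ‖x‖ with hr
  have hrpos : 0 < r := norm_pos_iff.mpr hx0
  -- a unit vector orthogonal to x
  obtain ⟨u0, hu0n, hu0o⟩ : ∃ u : H, ‖u‖ = 1 ∧ ⟪x, u⟫ = 0 := by
    have hne : ((ℝ ∙ x)ᗮ : Submodule ℝ H) ≠ ⊥ := by
      intro h
      have htop : (ℝ ∙ x) = ⊤ := Submodule.orthogonal_eq_bot_iff.mp h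
      have h1 : Module.rank ℝ H ≤ 1 := by
        rw [← rank_top ℝ H, ← htop]
        simpa using rank_span_le (R := ℝ) (M := H) {x}
      have := hdim.trans h1
      norm_num at this
    obtain ⟨v, hv, hv0⟩ := Submodule.exists_mem_ne_zero_of_ne_bot hne
    refine ⟨‖v‖⁻¹ • v, ?_, ?_⟩
    · rw [norm_smul, norm_inv, norm_norm, inv_mul_cancel₀ (norm_ne_zero_iff.mpr hv0)]
    · rw [real_inner_smul_right]
      have := (Submodule.mem_orthogonal _ v).mp hv x (Submodule.mem_span_singleton_self x)
      rw [this]; ring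
  set c : ℝ := ⟪x, y⟫ / r ^ 2 with hc
  have hxy : ⟪x, y⟫ = c * r ^ 2 := by
    rw [hc, div_mul_cancel₀ _ (pow_ne_zero 2 hrpos.ne')]
  have hcabs : |c| ≤ 1 := by
    rw [hc, abs_div, abs_of_nonneg (by positivity : (0:ℝ) ≤ r ^ 2), div_le_one (by positivity)]
    calc |⟪x, y⟫| ≤ ‖x‖ * ‖y‖ := abs_real_inner_le_norm x y
      _ = r ^ 2 := by rw [← hnorm, ← hr]; ring
  set w : H := y - c • x with hw
  have hxw : ⟪x, w⟫ = 0 := by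
    rw [hw, inner_sub_right, real_inner_smul_right, hxy, real_inner_self_eq_norm_sq, ← hr]
    ring
  have hwn : ‖w‖ = r * Real.sqrt (1 - c ^ 2) := by
    have h2 : ‖w‖ ^ 2 = r ^ 2 * (1 - c ^ 2) := by
      rw [hw, norm_sub_sq_real, real_inner_smul_right, real_inner_comm x y, hxy, norm_smul,
        ← hnorm, ← hr, Real.norm_eq_abs, mul_pow, sq_abs]
      ring
    calc ‖w‖ = Real.sqrt (‖w‖ ^ 2) := by rw [Real.sqrt_sq (norm_nonneg w)]
      _ = Real.sqrt (r ^ 2 * (1 - c ^ 2)) := by rw [h2]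
      _ = r * Real.sqrt (1 - c ^ 2) := by
          rw [Real.sqrt_mul (by positivity), Real.sqrt_sq hrpos.le]
  set φ : ℝ := Real.arccos c with hφ
  have hcos : Real.cos φ = c := Real.cos_arccos (neg_le_of_abs_le hcabs) (le_of_abs_le hcabs)
  have hsin : Real.sin φ = Real.sqrt (1 - c ^ 2) := Real.sin_arccos c
  have hsinr : Real.sin φ * r = ‖w‖ := by rw [hsin, hwn]; ring
  -- choose the unit vector u
  set u : H := if w = 0 then u0 else ‖w‖⁻¹ • w with hu
  have hun : ‖u‖ = 1 := by
    rw [hu]; split_ifs with h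
    · exact hu0n
    · rw [norm_smul, norm_inv, norm_norm, inv_mul_cancel₀ (norm_ne_zero_iff.mpr h)]
  have hxu : ⟪x, u⟫ = 0 := by
    rw [hu]; split_ifs with h
    · exact hu0o
    · rw [real_inner_smul_right, hxw]; ring
  have hy : y = Real.cos φ • x + (Real.sin φ * r) • u := by
    rw [hcos, hsinr, hu]
    split_ifs with h
    · have hy' : y = c • x := by
        have := hw.symm.trans h
        rwa [sub_eq_zero] at this
      rw [h, norm_zero, zero_smul, add_zero, hy']
    · rw [smul_smul, mul_inv_cancel₀ (norm_ne_zero_iff.mpr h), one_smul, hw]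
      abel
  -- the rotation curve
  set γ : ℝ → H := fun t => Real.cos t • x + (Real.sin t * r) • u with hγ
  have hγ0 : γ 0 = x := by simp [hγ]
  have hγφ : γ φ = y := by rw [hγ]; exact hy.symm
  have hxx : ⟪x, x⟫ = r ^ 2 := by rw [real_inner_self_eq_norm_sq]
  have huu : ⟪u, u⟫ = 1 := by rw [real_inner_self_eq_norm_sq, hun]; norm_num
  have hux : ⟪u, x⟫ = 0 := by rw [real_inner_comm]; exact hxu
  -- one rotation step
  have step : ∀ (a s θ : ℝ), Ω ((a * Real.cos θ) • γ s) ≤ Ω (a • γ (s + θ)) := by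
    intro a s θ
    set v : H := (a * Real.sin θ) • ((-Real.sin s) • x + (Real.cos s * r) • u) with hv
    have hdecomp : a • γ (s + θ) = (a * Real.cos θ) • γ s + v := by
      rw [hγ, hv]
      simp only [Real.cos_add, Real.sin_add]
      module
    have horth : ⟪(a * Real.cos θ) • γ s, v⟫ = 0 := by
      rw [hγ, hv]
      simp only [inner_add_left, inner_add_right, real_inner_smul_left, real_inner_smul_right,
        hxx, huu, hxu, hux]
      ring
    calc Ω ((a * Real.cos θ) • γ s) ≤ max (Ω ((a * Real.cos θ) • γ s)) (Ω v) := le_max_left _ _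
      _ ≤ Ω ((a * Real.cos θ) • γ s + v) := hΩ _ _ horth
      _ = Ω (a • γ (s + θ)) := by rw [← hdecomp]
  -- chaining n steps
  have chain : ∀ (k : ℕ) (θ a : ℝ), Ω ((a * Real.cos θ ^ k) • x) ≤ Ω (a • γ (k * θ)) := by
    intro k
    induction k with
    | zero => intro θ a; simp [hγ0]
    | succ n ih =>
      intro θ a
      have h1 : Ω ((a * Real.cos θ) • γ (n * θ)) ≤ Ω (a • γ (n * θ + θ)) := step a (n * θ) θ
      have h2 := ih θ (a * Real.cos θ)
      have e1 : ((n : ℝ) + 1) * θ = n * θ + θ := by ring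
      have e2 : a * Real.cos θ ^ (n + 1) = a * Real.cos θ * Real.cos θ ^ n := by ring
      calc Ω ((a * Real.cos θ ^ (n + 1)) • x) = Ω ((a * Real.cos θ * Real.cos θ ^ n) • x) := by
            rw [e2]
        _ ≤ Ω ((a * Real.cos θ) • γ (n * θ)) := h2
        _ ≤ Ω (a • γ (n * θ + θ)) := h1
        _ = Ω (a • γ (((n : ℕ) + 1 : ℕ) * θ)) := by push_cast; rw [e1]
  -- conclude via lower semicontinuity
  have hφ0 : 0 ≤ φ := Real.arccos_nonneg c
  have hφπ : φ ≤ Real.pi := Real.arccos_le_pi c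
  set t : ℕ → ℝ := fun N => Real.cos (φ / N) ^ N with ht
  have htend : Filter.Tendsto t Filter.atTop (nhds 1) := by
    have hlow : Filter.Tendsto (fun N : ℕ => 1 - φ ^ 2 / 2 * (1 / N)) Filter.atTop (nhds 1) := by
      have : Filter.Tendsto (fun N : ℕ => φ ^ 2 / 2 * (1 / N)) Filter.atTop (nhds 0) := by
        have h0 := tendsto_one_div_atTop_nhds_zero_nat.const_mul (φ ^ 2 / 2)
        rw [mul_zero] at h0
        exact h0
      simpa using (tendsto_const_nhds (x := (1:ℝ))).sub this
    refine tendsto_of_tendsto_of_tendsto_of_le_of_le' hlow tendsto_const_nhds ?_ ?_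
    · filter_upwards [Filter.eventually_ge_atTop 4] with N hN
      have hNpos : (0:ℝ) < N := by positivity
      have hle1 : φ / N ≤ 1 := by
        rw [div_le_one hNpos]
        calc φ ≤ Real.pi := hφπ
          _ ≤ 4 := by linarith [Real.pi_le_four]
          _ ≤ N := by exact_mod_cast hN
      have hge0 : 0 ≤ φ / N := by positivity
      have hsq : (φ / N) ^ 2 ≤ 1 := pow_le_one₀ hge0 hle1
      have hb : 0 ≤ 1 - (φ / N) ^ 2 / 2 := by linarith
      have hcb : 1 - (φ / N) ^ 2 / 2 ≤ Real.cos (φ / N) := Real.one_sub_sq_div_two_le_cos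
      have hbern : 1 + (N : ℝ) * (-( (φ / N) ^ 2 / 2)) ≤ (1 + (-((φ / N) ^ 2 / 2))) ^ N := by
        apply one_add_mul_le_pow
        linarith
      have hpow : (1 - (φ / N) ^ 2 / 2) ^ N ≤ Real.cos (φ / N) ^ N :=
        pow_le_pow_left₀ hb hcb N
      have heq : 1 + (N : ℝ) * (-((φ / N) ^ 2 / 2)) = 1 - φ ^ 2 / 2 * (1 / N) := by
        field_simp
        ring
      calc (1:ℝ) - φ ^ 2 / 2 * (1 / N) = 1 + (N : ℝ) * (-((φ / N) ^ 2 / 2)) := heq.symm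
        _ ≤ (1 + (-((φ / N) ^ 2 / 2))) ^ N := hbern
        _ = (1 - (φ / N) ^ 2 / 2) ^ N := by rw [← sub_eq_add_neg]
        _ ≤ Real.cos (φ / N) ^ N := hpow
    · filter_upwards [Filter.eventually_ge_atTop 4] with N hN
      have hNpos : (0:ℝ) < N := by positivity
      have hle1 : φ / N ≤ 1 := by
        rw [div_le_one hNpos]
        calc φ ≤ Real.pi := hφπ
          _ ≤ 4 := by linarith [Real.pi_le_four]
          _ ≤ N := by exact_mod_cast hN
      have hge0 : 0 ≤ φ / N := by positivity
      have hcn : 0 ≤ Real.cos (φ / N) := by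
        apply Real.cos_nonneg_of_mem_Icc
        constructor
        · linarith [Real.pi_pos]
        · linarith [Real.two_le_pi]
      exact pow_le_one₀ hcn (Real.cos_le_one _)
  have htendx : Filter.Tendsto (fun N => t N • x) Filter.atTop (nhds x) := by
    have := htend.smul_const x
    simpa using this
  apply le_of_forall_lt
  intro b hb
  have hev : ∀ᶠ N : ℕ in Filter.atTop, b < Ω (t N • x) :=
    htendx.eventually (hlsc x b hb)
  obtain ⟨N, hNb, hN1⟩ := (hev.and (Filter.eventually_ge_atTop 1)).exists
  have hNne : (N : ℝ) ≠ 0 := by positivity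
  have hkey : Ω (t N • x) ≤ Ω y := by
    have := chain N (φ / N) 1
    simp only [one_mul, one_smul] at this
    rw [mul_div_cancel₀ φ hNne, hγφ] at this
    exact this
  exact lt_of_lt_of_le hNb hkey
end

section
/- Let H be a Hilbert space, w_1, …, w_ℓ ∈ H, f: ℝ^ℓ → ℝ ∪ {+∞}, and Ω(w) = h(‖w‖) with h nondecreasing. If J(w) = f(⟨w,w_1⟩, …, ⟨w,w_ℓ⟩) + Ω(w) admits a minimizer, then it admits a minimizer lying in span{w_1, …, w_ℓ}. -/
open RealInnerProductSpace

theorem stmt8 {H : Type*} [NormedAddCommGroup H] [InnerProductSpace ℝ H] [CompleteSpace H]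
    (l : ℕ) (w : Fin l → H) (f : (Fin l → ℝ) → EReal)
    (h : ℝ → EReal) (hmono : Monotone h)
    (J : H → EReal) (hJ : ∀ v, J v = f (fun i => ⟪v, w i⟫) + h ‖v‖)
    (hmin : ∃ wstar : H, ∀ v, J wstar ≤ J v) :
    ∃ wstar ∈ Submodule.span ℝ (Set.range w), ∀ v, J wstar ≤ J v := by
  obtain ⟨ws, hws⟩ := hmin
  set K : Submodule ℝ H := Submodule.span ℝ (Set.range w) with hK
  haveI : FiniteDimensional ℝ K := by
    apply FiniteDimensional.span_of_finite
    exact Set.finite_range w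
  set u : H := (K.orthogonalProjectionOnto ws : H) with hu
  refine ⟨u, (K.orthogonalProjectionOnto ws).2, fun v => ?_⟩
  refine le_trans ?_ (hws v)
  rw [hJ u, hJ ws]
  have hinner : ∀ i, ⟪u, w i⟫ = ⟪ws, w i⟫ := by
    intro i
    have hw : w i ∈ K := Submodule.subset_span ⟨i, rfl⟩
    have := K.starProjection_inner_eq_zero ws (w i) hw
    have h2 : ⟪ws - u, w i⟫ = 0 := this
    have h3 := inner_sub_left (𝕜 := ℝ) ws u (w i)
    rw [h2] at h3
    linarith
  have hf : f (fun i => ⟪u, w i⟫) = f (fun i => ⟪ws, w i⟫) := by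
    congr 1; ext i; exact hinner i
  rw [hf]
  exact add_le_add_right (hmono (by simpa [hu] using (K.orthogonalProjectionOnto).le_of_opNorm_le (Submodule.orthogonalProjectionOnto_norm_le K) ws)) _
end
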